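/- Let H be a Hopf algebra and B an algebra, and consider the convolution algebra L(H,B) of linear maps with product (f*g)(h) = Σ f(h₁)g(h₂) and unit u(h) = ε(h)1. The map sending a left gauge transformation α of B ⊗ H to τ_α ∈ L(H,B), τ_α(h) = (id ⊗ ε)(α(1 ⊗ h)), is a group anti-homomorphism from the group of left gauge transformations (under composition) onto the group of convolution invertible unital linear maps H → B in L(H,B). -/

import Mathlib

open TensorProduct

set_option maxHeartbeats 1000000
set_option synthInstance.maxHeartbeats 400000

variable {k : Type*} [Field k]
variable {H : Type*} [Ring H] [HopfAlgebra k H]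
variable {B : Type*} [Ring B] [Algebra k B]

noncomputable def conv (f g : H →ₗ[k] B) : H →ₗ[k] B :=
  LinearMap.mul' k B ∘ₗ TensorProduct.map f g ∘ₗ Coalgebra.comul

noncomputable def convUnit : H →ₗ[k] B :=
  Algebra.linearMap k B ∘ₗ Coalgebra.counit

/-- `τ_α(h) = (id ⊗ ε)(α(1 ⊗ h))`. -/
noncomputable def tauOf (α : B ⊗[k] H →ₗ[k] B ⊗[k] H) : H →ₗ[k] B :=
  (TensorProduct.rid k B).toLinearMap ∘ₗ
    (TensorProduct.map LinearMap.id (Coalgebra.counit : H →ₗ[k] k)) ∘ₗ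
    α ∘ₗ (TensorProduct.mk k B H 1)

def IsLeftGauge (α : B ⊗[k] H →ₗ[k] B ⊗[k] H) : Prop :=
  Function.Bijective α ∧
  (∀ (a : B) (z : B ⊗[k] H), α (a • z) = a • α z) ∧
  ((TensorProduct.map α LinearMap.id) ∘ₗ
      (TensorProduct.assoc k B H H).symm.toLinearMap ∘ₗ
      (TensorProduct.map LinearMap.id (Coalgebra.comul : H →ₗ[k] H ⊗[k] H))
    = (TensorProduct.assoc k B H H).symm.toLinearMap ∘ₗ
      (TensorProduct.map LinearMap.id (Coalgebra.comul : H →ₗ[k] H ⊗[k] H)) ∘ₗ α) ∧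
  (∀ a : B, α (a ⊗ₜ[k] (1 : H)) = a ⊗ₜ[k] (1 : H))

/-! ### Auxiliary definitions and lemmas -/

lemma counit_smul_right {h : H} (r : Coalgebra.Repr k h (H × H)) :
    ∑ i ∈ r.index, Coalgebra.counit (R := k) (r.left i) • r.right i = h := by
  have := congrArg (TensorProduct.lid k H) (Coalgebra.sum_counit_tmul_eq r)
  simp only [map_sum, lid_tmul, one_smul] at this
  exact this

lemma counit_smul_left {h : H} (r : Coalgebra.Repr k h (H × H)) :
    ∑ i ∈ r.index, Coalgebra.counit (R := k) (r.right i) • r.left i = h := by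
  have := congrArg (TensorProduct.rid k H) (Coalgebra.sum_tmul_counit_eq r)
  simp only [map_sum, rid_tmul, one_smul] at this
  exact this

lemma coassoc_sum {M : Type*} [AddCommMonoid M] [Module k M]
    (G : H ⊗[k] (H ⊗[k] H) →ₗ[k] M) {h : H} (r : Coalgebra.Repr k h (H × H))
    (r₁ : ∀ i, Coalgebra.Repr k (r.left i) (H × H)) (r₂ : ∀ i, Coalgebra.Repr k (r.right i) (H × H)) :
    ∑ i ∈ r.index, ∑ j ∈ (r₁ i).index,
      G ((r₁ i).left j ⊗ₜ[k] ((r₁ i).right j ⊗ₜ[k] r.right i))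
    = ∑ i ∈ r.index, ∑ j ∈ (r₂ i).index,
      G (r.left i ⊗ₜ[k] ((r₂ i).left j ⊗ₜ[k] (r₂ i).right j)) := by
  have := congrArg G (Coalgebra.sum_tmul_tmul_eq r r₁ r₂)
  simpa only [map_sum] using this

noncomputable def ridEps : B ⊗[k] H →ₗ[k] B :=
  (TensorProduct.rid k B).toLinearMap ∘ₗ
    (TensorProduct.map LinearMap.id (Coalgebra.counit : H →ₗ[k] k))

lemma ridEps_tmul (b : B) (h : H) :
    (ridEps : B ⊗[k] H →ₗ[k] B) (b ⊗ₜ[k] h) = Coalgebra.counit (R := k) h • b := by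
  simp [ridEps]

lemma tauOf_apply (α : B ⊗[k] H →ₗ[k] B ⊗[k] H) (h : H) :
    tauOf α h = ridEps (α ((1 : B) ⊗ₜ[k] h)) := rfl

lemma ridEps_smul (b : B) (z : B ⊗[k] H) : ridEps (b • z) = b * ridEps z := by
  induction z using TensorProduct.induction_on with
  | zero => simp
  | tmul c y => simp [smul_tmul', ridEps_tmul, smul_eq_mul, Algebra.mul_smul_comm]
  | add x y hx hy => simp [smul_add, hx, hy, mul_add]

lemma conv_apply (f g : H →ₗ[k] B) (h : H) (r : Coalgebra.Repr k h (H × H)) :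
    conv f g h = ∑ i ∈ r.index, f (r.left i) * g (r.right i) := by
  simp [conv, ← r.eq, map_sum]

lemma convUnit_apply (h : H) :
    (convUnit : H →ₗ[k] B) h = Coalgebra.counit (R := k) h • (1 : B) := by
  simp [convUnit, Algebra.algebraMap_eq_smul_one]

/-- The gauge transformation associated to a linear map `τ : H → B`:
`b ⊗ h ↦ ∑ b τ(h₁) ⊗ h₂`. -/
noncomputable def alphaOf (τ : H →ₗ[k] B) : B ⊗[k] H →ₗ[k] B ⊗[k] H :=
  TensorProduct.map (LinearMap.mul' k B ∘ₗ TensorProduct.map LinearMap.id τ) LinearMap.id ∘ₗ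
    (TensorProduct.assoc k B H H).symm.toLinearMap ∘ₗ
    TensorProduct.map LinearMap.id (Coalgebra.comul : H →ₗ[k] H ⊗[k] H)

lemma alphaOf_tmul (τ : H →ₗ[k] B) (b : B) (h : H) (r : Coalgebra.Repr k h (H × H)) :
    alphaOf τ (b ⊗ₜ[k] h) = ∑ i ∈ r.index, (b * τ (r.left i)) ⊗ₜ[k] r.right i := by
  have hc : (Coalgebra.comul (R := k) h) = ∑ i ∈ r.index, r.left i ⊗ₜ[k] r.right i := r.eq.symm
  simp only [alphaOf, LinearMap.comp_apply, map_tmul, LinearMap.id_apply, hc, tmul_sum,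
    map_sum, LinearEquiv.coe_coe, assoc_symm_tmul, LinearMap.mul'_apply]

lemma P_delta (z : B ⊗[k] H) :
    (TensorProduct.map (ridEps : B ⊗[k] H →ₗ[k] B) LinearMap.id)
      ((TensorProduct.assoc k B H H).symm
        (TensorProduct.map LinearMap.id (Coalgebra.comul : H →ₗ[k] H ⊗[k] H) z)) = z := by
  induction z using TensorProduct.induction_on with
  | zero => simp
  | tmul c y =>
      set r := Coalgebra.Repr.arbitrary k y with hr
      have hy : (Coalgebra.comul (R := k) y) = ∑ i ∈ r.index, r.left i ⊗ₜ[k] r.right i :=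
        r.eq.symm
      rw [show (TensorProduct.map LinearMap.id (Coalgebra.comul : H →ₗ[k] H ⊗[k] H))
            (c ⊗ₜ[k] y) = c ⊗ₜ[k] Coalgebra.comul (R := k) y by simp]
      rw [hy, tmul_sum, map_sum, map_sum]
      simp only [assoc_symm_tmul, map_tmul, LinearMap.id_apply,
        ridEps_tmul, smul_tmul, ← tmul_sum]
      rw [counit_smul_right]
  | add x y hx hy => simp only [map_add, hx, hy]

lemma gauge_tmul {α : B ⊗[k] H →ₗ[k] B ⊗[k] H} (hα : IsLeftGauge α) (b : B) (h : H)
    (r : Coalgebra.Repr k h (H × H)) :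
    α (b ⊗ₜ[k] h) = ∑ i ∈ r.index, (b * tauOf α (r.left i)) ⊗ₜ[k] r.right i := by
  have hco := LinearMap.congr_fun hα.2.2.1 (b ⊗ₜ[k] h)
  simp only [LinearMap.comp_apply, LinearEquiv.coe_coe] at hco
  have key := congrArg (TensorProduct.map (ridEps : B ⊗[k] H →ₗ[k] B) LinearMap.id) hco
  rw [P_delta] at key
  rw [← key]
  have hc : (Coalgebra.comul (R := k) h) = ∑ i ∈ r.index, r.left i ⊗ₜ[k] r.right i := r.eq.symm
  rw [show (TensorProduct.map LinearMap.id (Coalgebra.comul : H →ₗ[k] H ⊗[k] H))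
        (b ⊗ₜ[k] h) = b ⊗ₜ[k] Coalgebra.comul (R := k) h by simp]
  rw [hc, tmul_sum, map_sum, map_sum, map_sum]
  refine Finset.sum_congr rfl fun i _ => ?_
  have hb : b ⊗ₜ[k] r.left i = b • ((1 : B) ⊗ₜ[k] r.left i) := by
    simp [smul_tmul', smul_eq_mul]
  simp only [assoc_symm_tmul, map_tmul, LinearMap.id_apply]
  rw [hb, hα.2.1, ridEps_smul, ← tauOf_apply]

lemma gauge_eq_alphaOf {α : B ⊗[k] H →ₗ[k] B ⊗[k] H} (hα : IsLeftGauge α) :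
    α = alphaOf (tauOf α) := by
  apply TensorProduct.ext'
  intro b h
  rw [gauge_tmul hα b h (Coalgebra.Repr.arbitrary k h),
    alphaOf_tmul (tauOf α) b h (Coalgebra.Repr.arbitrary k h)]

lemma tauOf_alphaOf (τ : H →ₗ[k] B) : tauOf (alphaOf τ) = τ := by
  ext h
  rw [tauOf_apply, alphaOf_tmul τ 1 h (Coalgebra.Repr.arbitrary k h), map_sum]
  simp only [ridEps_tmul, one_mul, ← map_smul, ← map_sum]
  rw [counit_smul_left]

/-- auxiliary map for the composition computation -/
noncomputable def G1 (σ τ : H →ₗ[k] B) (b : B) : H ⊗[k] (H ⊗[k] H) →ₗ[k] B ⊗[k] H :=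
  (LinearMap.rTensor H (LinearMap.mulLeft k b)) ∘ₗ
  (TensorProduct.map (LinearMap.mul' k B) LinearMap.id) ∘ₗ
  (TensorProduct.assoc k B B H).symm.toLinearMap ∘ₗ
  (TensorProduct.map σ (TensorProduct.map τ LinearMap.id))

lemma G1_tmul (σ τ : H →ₗ[k] B) (b : B) (x y z : H) :
    G1 σ τ b (x ⊗ₜ[k] (y ⊗ₜ[k] z)) = (b * (σ x * τ y)) ⊗ₜ[k] z := by
  simp [G1]

lemma alphaOf_comp (σ τ : H →ₗ[k] B) :
    alphaOf τ ∘ₗ alphaOf σ = alphaOf (conv σ τ) := by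
  apply TensorProduct.ext'
  intro b h
  set r := Coalgebra.Repr.arbitrary k h with hrdef
  have r₁ : ∀ i, Coalgebra.Repr k (r.left i) (H × H) := fun i => Coalgebra.Repr.arbitrary k (r.left i)
  have r₂ : ∀ i, Coalgebra.Repr k (r.right i) (H × H) := fun i => Coalgebra.Repr.arbitrary k (r.right i)
  have key := coassoc_sum (G1 σ τ b) r r₁ r₂
  simp only [G1_tmul] at key
  calc (alphaOf τ ∘ₗ alphaOf σ) (b ⊗ₜ[k] h)
      = ∑ i ∈ r.index, alphaOf τ ((b * σ (r.left i)) ⊗ₜ[k] r.right i) := by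
        rw [LinearMap.comp_apply, alphaOf_tmul σ b h r, map_sum]
    _ = ∑ i ∈ r.index, ∑ j ∈ (r₂ i).index,
          (b * σ (r.left i) * τ ((r₂ i).left j)) ⊗ₜ[k] (r₂ i).right j := by
        refine Finset.sum_congr rfl fun i _ => ?_
        rw [alphaOf_tmul τ _ _ (r₂ i)]
    _ = ∑ i ∈ r.index, ∑ j ∈ (r₂ i).index,
          (b * (σ (r.left i) * τ ((r₂ i).left j))) ⊗ₜ[k] (r₂ i).right j := by
        simp only [mul_assoc]
    _ = ∑ i ∈ r.index, ∑ j ∈ (r₁ i).index,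
          (b * (σ ((r₁ i).left j) * τ ((r₁ i).right j))) ⊗ₜ[k] r.right i := key.symm
    _ = ∑ i ∈ r.index, (b * conv σ τ (r.left i)) ⊗ₜ[k] r.right i := by
        refine Finset.sum_congr rfl fun i _ => ?_
        rw [conv_apply σ τ _ (r₁ i), Finset.mul_sum, TensorProduct.sum_tmul]
    _ = alphaOf (conv σ τ) (b ⊗ₜ[k] h) := (alphaOf_tmul _ b h r).symm

lemma alphaOf_convUnit : (alphaOf (convUnit : H →ₗ[k] B)) = LinearMap.id := by
  apply TensorProduct.ext'
  intro b h
  rw [alphaOf_tmul _ b h (Coalgebra.Repr.arbitrary k h)]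
  simp only [convUnit_apply, mul_smul_comm, mul_one, LinearMap.id_apply]
  simp only [smul_tmul, ← tmul_sum]
  rw [counit_smul_right]

/-- auxiliary map for the colinearity computation -/
noncomputable def G2 (τ : H →ₗ[k] B) (b : B) : H ⊗[k] (H ⊗[k] H) →ₗ[k] (B ⊗[k] H) ⊗[k] H :=
  TensorProduct.map (TensorProduct.map (LinearMap.mulLeft k b ∘ₗ τ) LinearMap.id) LinearMap.id ∘ₗ
    (TensorProduct.assoc k H H H).symm.toLinearMap

lemma G2_tmul (τ : H →ₗ[k] B) (b : B) (x y z : H) :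
    G2 τ b (x ⊗ₜ[k] (y ⊗ₜ[k] z)) = ((b * τ x) ⊗ₜ[k] y) ⊗ₜ[k] z := by
  simp [G2]

lemma alphaOf_colinear (τ : H →ₗ[k] B) :
    (TensorProduct.map (alphaOf τ) LinearMap.id) ∘ₗ
      (TensorProduct.assoc k B H H).symm.toLinearMap ∘ₗ
      (TensorProduct.map LinearMap.id (Coalgebra.comul : H →ₗ[k] H ⊗[k] H))
    = (TensorProduct.assoc k B H H).symm.toLinearMap ∘ₗ
      (TensorProduct.map LinearMap.id (Coalgebra.comul : H →ₗ[k] H ⊗[k] H)) ∘ₗ alphaOf τ := by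
  apply TensorProduct.ext'
  intro b h
  set r := Coalgebra.Repr.arbitrary k h with hrdef
  have r₁ : ∀ i, Coalgebra.Repr k (r.left i) (H × H) := fun i => Coalgebra.Repr.arbitrary k (r.left i)
  have r₂ : ∀ i, Coalgebra.Repr k (r.right i) (H × H) := fun i => Coalgebra.Repr.arbitrary k (r.right i)
  have key := coassoc_sum (G2 τ b) r r₁ r₂
  simp only [G2_tmul] at key
  have hc : (Coalgebra.comul (R := k) h) = ∑ i ∈ r.index, r.left i ⊗ₜ[k] r.right i := r.eq.symm
  calc ((TensorProduct.map (alphaOf τ) LinearMap.id) ∘ₗ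
      (TensorProduct.assoc k B H H).symm.toLinearMap ∘ₗ
      (TensorProduct.map LinearMap.id (Coalgebra.comul : H →ₗ[k] H ⊗[k] H))) (b ⊗ₜ[k] h)
      = ∑ i ∈ r.index, (alphaOf τ (b ⊗ₜ[k] r.left i)) ⊗ₜ[k] r.right i := by
        simp only [LinearMap.comp_apply, map_tmul, LinearMap.id_apply, hc, tmul_sum, map_sum,
          LinearEquiv.coe_coe, assoc_symm_tmul]
    _ = ∑ i ∈ r.index, ∑ j ∈ (r₁ i).index,
          (((b * τ ((r₁ i).left j)) ⊗ₜ[k] (r₁ i).right j) ⊗ₜ[k] r.right i) := by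
        refine Finset.sum_congr rfl fun i _ => ?_
        rw [alphaOf_tmul τ b _ (r₁ i), TensorProduct.sum_tmul]
    _ = ∑ i ∈ r.index, ∑ j ∈ (r₂ i).index,
          (((b * τ (r.left i)) ⊗ₜ[k] (r₂ i).left j) ⊗ₜ[k] (r₂ i).right j) := key
    _ = ((TensorProduct.assoc k B H H).symm.toLinearMap ∘ₗ
      (TensorProduct.map LinearMap.id (Coalgebra.comul : H →ₗ[k] H ⊗[k] H)) ∘ₗ
        alphaOf τ) (b ⊗ₜ[k] h) := by
        simp only [LinearMap.comp_apply, alphaOf_tmul τ b h r, map_sum, map_tmul,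
          LinearMap.id_apply, LinearEquiv.coe_coe]
        refine Finset.sum_congr rfl fun i _ => ?_
        have hc2 : (Coalgebra.comul (R := k) (r.right i))
            = ∑ j ∈ (r₂ i).index, (r₂ i).left j ⊗ₜ[k] (r₂ i).right j := (r₂ i).eq.symm
        rw [hc2, tmul_sum, map_sum]
        simp only [assoc_symm_tmul]

lemma alphaOf_smul (τ : H →ₗ[k] B) (a : B) (z : B ⊗[k] H) :
    alphaOf τ (a • z) = a • alphaOf τ z := by
  induction z using TensorProduct.induction_on with
  | zero => simp
  | tmul c y =>
      have h1 : a • (c ⊗ₜ[k] y) = (a * c) ⊗ₜ[k] y := by simp [smul_tmul', smul_eq_mul]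
      rw [h1, alphaOf_tmul τ (a * c) y (Coalgebra.Repr.arbitrary k y),
        alphaOf_tmul τ c y (Coalgebra.Repr.arbitrary k y), Finset.smul_sum]
      refine Finset.sum_congr rfl fun i _ => ?_
      simp [smul_tmul', smul_eq_mul, mul_assoc]
  | add x y hx hy => simp [smul_add, hx, hy]

lemma alphaOf_tmul_one (τ : H →ₗ[k] B) (a : B) :
    alphaOf τ (a ⊗ₜ[k] (1 : H)) = (a * τ 1) ⊗ₜ[k] (1 : H) := by
  simp [alphaOf, Bialgebra.comul_one, Algebra.TensorProduct.one_def]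

lemma tauOf_id : tauOf (LinearMap.id : B ⊗[k] H →ₗ[k] B ⊗[k] H) = convUnit := by
  ext h
  rw [tauOf_apply, LinearMap.id_apply, ridEps_tmul, convUnit_apply]

lemma gauge_inv {α : B ⊗[k] H →ₗ[k] B ⊗[k] H} (hα : IsLeftGauge α) :
    ∃ β : B ⊗[k] H →ₗ[k] B ⊗[k] H, IsLeftGauge β ∧
      α ∘ₗ β = LinearMap.id ∧ β ∘ₗ α = LinearMap.id := by
  set e := LinearEquiv.ofBijective α hα.1 with he
  set β := e.symm.toLinearMap with hβ
  have hαβ : ∀ z, α (β z) = z := fun z => e.apply_symm_apply z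
  have hβα : ∀ z, β (α z) = z := fun z => e.symm_apply_apply z
  have h1 : β ∘ₗ α = LinearMap.id := LinearMap.ext hβα
  have h2 : α ∘ₗ β = LinearMap.id := LinearMap.ext hαβ
  have hmap : (TensorProduct.map β (LinearMap.id : H →ₗ[k] H)) ∘ₗ
      (TensorProduct.map α LinearMap.id) = LinearMap.id := by
    rw [← TensorProduct.map_comp, h1, LinearMap.id_comp, TensorProduct.map_id]
  refine ⟨β, ⟨e.symm.bijective, ?_, ?_, ?_⟩, h2, h1⟩
  · intro a z
    apply hα.1.1
    rw [hαβ, hα.2.1, hαβ]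
  · apply LinearMap.ext
    intro z
    have hco := fun w => LinearMap.congr_fun hα.2.2.1 w
    simp only [LinearMap.comp_apply, LinearEquiv.coe_coe] at hco ⊢
    set X : B ⊗[k] H →ₗ[k] (B ⊗[k] H) ⊗[k] H :=
      (TensorProduct.assoc k B H H).symm.toLinearMap ∘ₗ
        (TensorProduct.map LinearMap.id (Coalgebra.comul : H →ₗ[k] H ⊗[k] H)) with hX
    show TensorProduct.map β LinearMap.id (X z) = X (β z)
    have step : TensorProduct.map α LinearMap.id (X (β z)) = X z := by
      have := hco (β z)
      show TensorProduct.map α LinearMap.id (X (β z)) = X z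
      rw [show (TensorProduct.map α LinearMap.id) (X (β z)) = X (α (β z)) from this, hαβ]
    rw [← step, ← LinearMap.comp_apply, hmap, LinearMap.id_apply]
  · intro a
    apply hα.1.1
    rw [hαβ, hα.2.2.2]

lemma tauOf_comp {α β : B ⊗[k] H →ₗ[k] B ⊗[k] H} (hα : IsLeftGauge α) (hβ : IsLeftGauge β) :
    tauOf (α ∘ₗ β) = conv (tauOf β) (tauOf α) := by
  have h : α ∘ₗ β = alphaOf (conv (tauOf β) (tauOf α)) := by
    conv_lhs => rw [gauge_eq_alphaOf hα, gauge_eq_alphaOf hβ]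
    rw [alphaOf_comp]
  rw [h, tauOf_alphaOf]

/-- `α ↦ τ_α` is a group anti-homomorphism from the group of left gauge
transformations onto the group of convolution invertible unital linear maps. -/
theorem statement_15 :
    (∀ α β : B ⊗[k] H →ₗ[k] B ⊗[k] H, IsLeftGauge α → IsLeftGauge β →
      tauOf (α ∘ₗ β) = conv (tauOf β) (tauOf α)) ∧
    (∀ α : B ⊗[k] H →ₗ[k] B ⊗[k] H, IsLeftGauge α →
      tauOf α 1 = 1 ∧
      ∃ τ' : H →ₗ[k] B, conv τ' (tauOf α) = (convUnit : H →ₗ[k] B) ∧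
        conv (tauOf α) τ' = (convUnit : H →ₗ[k] B)) ∧
    (∀ τ : H →ₗ[k] B, τ 1 = 1 →
      (∃ τ' : H →ₗ[k] B, conv τ' τ = (convUnit : H →ₗ[k] B) ∧
        conv τ τ' = (convUnit : H →ₗ[k] B)) →
      ∃ α : B ⊗[k] H →ₗ[k] B ⊗[k] H, IsLeftGauge α ∧ tauOf α = τ) := by
  refine ⟨fun α β hα hβ => tauOf_comp hα hβ, fun α hα => ?_, fun τ hτ1 hinv => ?_⟩
  · obtain ⟨β, hβ, hαβ, hβα⟩ := gauge_inv hα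
    refine ⟨?_, tauOf β, ?_, ?_⟩
    · rw [tauOf_apply, hα.2.2.2 1, ridEps_tmul, Bialgebra.counit_one, one_smul]
    · rw [← tauOf_comp hα hβ, hαβ, tauOf_id]
    · rw [← tauOf_comp hβ hα, hβα, tauOf_id]
  · obtain ⟨τ', h1, h2⟩ := hinv
    have l1 : alphaOf τ' ∘ₗ alphaOf τ = LinearMap.id := by
      rw [alphaOf_comp, h2, alphaOf_convUnit]
    have l2 : alphaOf τ ∘ₗ alphaOf τ' = LinearMap.id := by
      rw [alphaOf_comp, h1, alphaOf_convUnit]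
    have L : Function.LeftInverse (alphaOf τ') (alphaOf τ) := fun z => LinearMap.congr_fun l1 z
    have R : Function.RightInverse (alphaOf τ') (alphaOf τ) := fun z => LinearMap.congr_fun l2 z
    refine ⟨alphaOf τ, ⟨⟨L.injective, R.surjective⟩, alphaOf_smul τ, alphaOf_colinear τ, ?_⟩,
      tauOf_alphaOf τ⟩
    intro a
    rw [alphaOf_tmul_one, hτ1, mul_one]
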